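/- arXiv:2312.10506 — 2 statements merged into one kernel-verified Lean document; each statement's English description precedes it below -/
import Mathlib

section
/- Let A be a Hurwitz d×d real matrix and x₀ ∈ ℝ^d. Then the trajectory x(t) = e^{tA}x₀ possesses a cut tail point: there exists T > 0 such that x(t) lies in the relative interior of G = co_s {x(s) : s ≥ 0} for every t ≥ T. -/
open Matrix Set Filter Topology

noncomputable section

/-- A real square matrix is *Hurwitz* if all its (complex) eigenvalues,
i.e. the roots of its characteristic polynomial over `ℂ`, have negative real part. -/
def IsHurwitz {d : ℕ} (A : Matrix (Fin d) (Fin d) ℝ) : Prop :=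
  ∀ μ : ℂ, (A.map (algebraMap ℝ ℂ)).charpoly.IsRoot μ → μ.re < 0

/-- The trajectory `x(t) = e^{tA} x₀` of the linear system `ẋ = Ax`. -/
def traj {d : ℕ} (A : Matrix (Fin d) (Fin d) ℝ) (x₀ : Fin d → ℝ) (t : ℝ) : Fin d → ℝ :=
  (NormedSpace.exp (t • A)).mulVec x₀

/-- Symmetrized convex hull `co_s X = co (X ∪ (−X))`. -/
def symCo {d : ℕ} (X : Set (Fin d → ℝ)) : Set (Fin d → ℝ) :=
  convexHull ℝ (X ∪ (-X))

/-- `G = co_s {x(t) : t ≥ 0}`, the symmetrized convex hull of the whole trajectory. -/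
def trajHull {d : ℕ} (A : Matrix (Fin d) (Fin d) ℝ) (x₀ : Fin d → ℝ) : Set (Fin d → ℝ) :=
  symCo (traj A x₀ '' Ici (0:ℝ))

/-- `T > 0` is a *cut tail point* of the trajectory starting at `x₀` if `x(t)` lies in the
relative (intrinsic) interior of `G` for every `t ≥ T`. -/
def IsCutTailPoint {d : ℕ} (A : Matrix (Fin d) (Fin d) ℝ) (x₀ : Fin d → ℝ) (T : ℝ) : Prop :=
  0 < T ∧ ∀ t, T ≤ t → traj A x₀ t ∈ intrinsicInterior ℝ (trajHull A x₀)

/-- `T_cut(x₀)`: the infimum of all cut tail points of the trajectory starting at `x₀`. -/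
def Tcut {d : ℕ} (A : Matrix (Fin d) (Fin d) ℝ) (x₀ : Fin d → ℝ) : ℝ :=
  sInf {T | IsCutTailPoint A x₀ T}

/-- `L_{x₀}`: the minimal `A`-invariant linear subspace of `ℝ^d` containing `x₀`. -/
def minInv {d : ℕ} (A : Matrix (Fin d) (Fin d) ℝ) (x₀ : Fin d → ℝ) : Submodule ℝ (Fin d → ℝ) :=
  sInf {L | x₀ ∈ L ∧ ∀ v ∈ L, A.mulVec v ∈ L}

/-- A point `x₀` is *generic* if `dim L_{x₀}` equals the degree of the minimal polynomial of `A`. -/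
def IsGeneric {d : ℕ} (A : Matrix (Fin d) (Fin d) ℝ) (x₀ : Fin d → ℝ) : Prop :=
  Module.finrank ℝ (minInv A x₀) = (minpoly ℝ A).natDegree

lemma aux_scalar (μ : ℂ) (hμ : μ.re < 0) (j : ℕ) :
    Tendsto (fun t : ℝ => Complex.exp ((t:ℂ) * μ) * ((t:ℂ)^j * ((j.factorial : ℂ))⁻¹))
      atTop (𝓝 0) := by
  set c : ℝ := -μ.re with hc
  have hc0 : 0 < c := by simp [hc]; linarith
  have key : Tendsto (fun t : ℝ => t ^ j * Real.exp (-(c * t))) atTop (𝓝 0) := by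
    have h1 := Real.tendsto_pow_mul_exp_neg_atTop_nhds_zero j
    have h2 : Tendsto (fun t : ℝ => c * t) atTop atTop :=
      Tendsto.const_mul_atTop hc0 tendsto_id
    have h3 := (h1.comp h2).const_mul ((c ^ j)⁻¹)
    rw [mul_zero] at h3
    refine h3.congr fun t => ?_
    have : c ^ j ≠ 0 := pow_ne_zero _ hc0.ne'
    field_simp [Function.comp, mul_pow]
    rw [Function.comp_apply, mul_pow]
  have hnorm : ∀ t : ℝ, 0 ≤ t →
      ‖Complex.exp ((t:ℂ) * μ) * ((t:ℂ)^j * ((j.factorial : ℂ))⁻¹)‖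
        = ((j.factorial : ℝ))⁻¹ * (t ^ j * Real.exp (-(c * t))) := by
    intro t ht
    rw [norm_mul, norm_mul, Complex.norm_exp, norm_inv, norm_pow]
    have h1 : (((t:ℂ)) * μ).re = t * μ.re := by
      simp [Complex.mul_re]
    have h2 : ‖(t:ℂ)‖ = t := by
      rw [Complex.norm_real, Real.norm_eq_abs, abs_of_nonneg ht]
    have h3 : ‖((j.factorial : ℂ))‖ = (j.factorial : ℝ) := by
      rw [Complex.norm_natCast]
    rw [h1, h2, h3]
    have : -(c * t) = t * μ.re := by rw [hc]; ring
    rw [this]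
    ring
  have hb := key.const_mul (((j.factorial : ℝ))⁻¹)
  rw [mul_zero] at hb
  apply squeeze_zero_norm' _ hb
  filter_upwards [eventually_ge_atTop (0:ℝ)] with t ht
  exact le_of_eq (hnorm t ht)

-- mulVec as a continuous linear map in the matrix argument
def mulVecCLM {d : ℕ} (v : Fin d → ℂ) :
    Matrix (Fin d) (Fin d) ℂ →L[ℂ] (Fin d → ℂ) :=
  LinearMap.toContinuousLinearMap
    { toFun := fun M => M *ᵥ v
      map_add' := fun M N => Matrix.add_mulVec M N v
      map_smul' := fun c M => Matrix.smul_mulVec c M v }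

@[simp] lemma mulVecCLM_apply {d : ℕ} (v : Fin d → ℂ) (M : Matrix (Fin d) (Fin d) ℂ) :
    mulVecCLM v M = M *ᵥ v := rfl

lemma exp_mulVec_eq {d : ℕ} (B : Matrix (Fin d) (Fin d) ℂ) (μ : ℂ) (v : Fin d → ℂ) (k : ℕ)
    (hv : ((B - μ • (1 : Matrix (Fin d) (Fin d) ℂ)) ^ k) *ᵥ v = 0) (t : ℝ) :
    NormedSpace.exp (t • B) *ᵥ v
      = ∑ j ∈ Finset.range k,
          (Complex.exp ((t:ℂ) * μ) * ((t:ℂ)^j * ((j.factorial : ℂ))⁻¹)) •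
            (((B - μ • (1 : Matrix (Fin d) (Fin d) ℂ)) ^ j) *ᵥ v) := by
  letI : SeminormedRing (Matrix (Fin d) (Fin d) ℂ) := Matrix.linftyOpSemiNormedRing
  letI : NormedRing (Matrix (Fin d) (Fin d) ℂ) := Matrix.linftyOpNormedRing
  letI : NormedAlgebra ℂ (Matrix (Fin d) (Fin d) ℂ) := Matrix.linftyOpNormedAlgebra
  set Nm := B - μ • (1 : Matrix (Fin d) (Fin d) ℂ) with hNm
  have hsplit : t • B = ((t:ℂ) * μ) • (1 : Matrix (Fin d) (Fin d) ℂ) + (t:ℂ) • Nm := by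
    have h1 : (t:ℂ) • B = t • B := by
      rw [show ((t:ℂ)) = algebraMap ℝ ℂ t from rfl, algebraMap_smul]
    rw [hNm, smul_sub, smul_smul, ← h1]
    abel
  have hcomm : Commute (((t:ℂ) * μ) • (1 : Matrix (Fin d) (Fin d) ℂ)) ((t:ℂ) • Nm) :=
    ((Commute.one_left Nm).smul_left ((t:ℂ) * μ)).smul_right (t:ℂ)
  rw [hsplit, Matrix.exp_add_of_commute _ _ hcomm]
  have h1 : NormedSpace.exp (((t:ℂ) * μ) • (1 : Matrix (Fin d) (Fin d) ℂ))
      = Complex.exp ((t:ℂ) * μ) • (1 : Matrix (Fin d) (Fin d) ℂ) := by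
    rw [← Algebra.algebraMap_eq_smul_one]
    refine (NormedSpace.algebraMap_exp_comm (𝕂 := ℂ) (𝔸 := Matrix (Fin d) (Fin d) ℂ) _).symm.trans ?_
    rw [← Complex.exp_eq_exp_ℂ, Algebra.algebraMap_eq_smul_one]
  rw [h1, smul_mul_assoc, one_mul, Matrix.smul_mulVec]
  -- now compute exp (t • Nm) *ᵥ v
  have hsum : Summable (fun n : ℕ => ((n.factorial : ℂ))⁻¹ • ((t:ℂ) • Nm) ^ n) := by
    exact_mod_cast NormedSpace.expSeries_summable' (𝕂 := ℂ) ((t:ℂ) • Nm)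
  have h2 : NormedSpace.exp ((t:ℂ) • Nm) *ᵥ v
      = ∑' n : ℕ, ((n.factorial : ℂ))⁻¹ • (((t:ℂ) • Nm) ^ n *ᵥ v) := by
    rw [NormedSpace.exp_eq_tsum ℂ, ← mulVecCLM_apply v]
    rw [ContinuousLinearMap.map_tsum _ hsum]
    refine tsum_congr fun n => ?_
    rw [_root_.map_smul, mulVecCLM_apply]
  rw [h2]
  rw [tsum_eq_sum (s := Finset.range k) ?hvanish]
  case hvanish =>
    intro n hn
    rw [Finset.mem_range, not_lt] at hn
    have : Nm ^ n *ᵥ v = 0 := by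
      have hpow : Nm ^ n = Nm ^ (n - k) * Nm ^ k := by
        rw [← pow_add]; congr 1; omega
      rw [hpow, ← Matrix.mulVec_mulVec, hv, Matrix.mulVec_zero]
    rw [smul_pow, Matrix.smul_mulVec, this, smul_zero, smul_zero]
  rw [Finset.smul_sum]
  refine Finset.sum_congr rfl fun j hj => ?_
  rw [smul_pow, Matrix.smul_mulVec, smul_smul, smul_smul]
  congr 1
  ring

lemma tendsto_traj {d : ℕ} (A : Matrix (Fin d) (Fin d) ℝ) (hA : IsHurwitz A)
    (x₀ : Fin d → ℝ) : Tendsto (traj A x₀) atTop (𝓝 0) := by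
  classical
  set B : Matrix (Fin d) (Fin d) ℂ := A.map (algebraMap ℝ ℂ) with hB
  -- every complex vector is flushed to zero by exp (t • B)
  have main : ∀ z : Fin d → ℂ,
      Tendsto (fun t : ℝ => NormedSpace.exp (t • B) *ᵥ z) atTop (𝓝 0) := by
    set S : Submodule ℂ (Fin d → ℂ) :=
      { carrier := {z | Tendsto (fun t : ℝ => NormedSpace.exp (t • B) *ᵥ z) atTop (𝓝 0)}
        add_mem' := by
          intro a b ha hb
          simp only [Set.mem_setOf_eq] at ha hb ⊢
          have := ha.add hb
          rw [add_zero] at this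
          exact this.congr fun t => (Matrix.mulVec_add _ _ _).symm
        zero_mem' := by
          simp only [Set.mem_setOf_eq, Matrix.mulVec_zero]
          exact tendsto_const_nhds
        smul_mem' := by
          intro c a ha
          simp only [Set.mem_setOf_eq] at ha ⊢
          have := ha.const_smul c
          rw [smul_zero] at this
          exact this.congr fun t => (Matrix.mulVec_smul _ _ _).symm } with hS
    set g : Module.End ℂ (Fin d → ℂ) := Matrix.toLinAlgEquiv' B with hg
    have htop := Module.End.iSup_maxGenEigenspace_eq_top g
    intro z
    have hz : z ∈ ⨆ μ : ℂ, g.maxGenEigenspace μ := htop ▸ Submodule.mem_top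
    have hle : (⨆ μ : ℂ, g.maxGenEigenspace μ) ≤ S := by
      refine iSup_le fun μ => ?_
      intro v hv
      obtain ⟨k, hk⟩ := (Module.End.mem_maxGenEigenspace g μ v).1 hv
      by_cases hv0 : v = 0
      · subst hv0; exact S.zero_mem
      -- μ is an eigenvalue, hence Hurwitz gives re μ < 0
      have hvk : v ∈ g.genEigenspace μ (k:ℕ∞) := by
        rw [Module.End.mem_genEigenspace_nat (k := k)]
        exact LinearMap.mem_ker.2 hk
      have hev : g.HasEigenvalue μ :=
        Module.End.hasEigenvalue_of_hasGenEigenvalue (k := k)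
          (Submodule.ne_bot_iff _ |>.2 ⟨v, hvk, hv0⟩)
      have hroot : (B.charpoly).IsRoot μ := by
        have h1 : (minpoly ℂ g).IsRoot μ := Module.End.isRoot_of_hasEigenvalue hev
        have h2 : minpoly ℂ g = minpoly ℂ B := minpoly.algEquiv_eq (Matrix.toLinAlgEquiv') B
        obtain ⟨q, hq⟩ := B.minpoly_dvd_charpoly
        rw [Polynomial.IsRoot, hq, Polynomial.eval_mul]
        rw [h2] at h1
        rw [h1]
        ring
      have hμ : μ.re < 0 := hA μ hroot
      -- the matrix-level nilpotency
      have hNmv : ((B - μ • (1 : Matrix (Fin d) (Fin d) ℂ)) ^ k) *ᵥ v = 0 := by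
        have h3 : Matrix.toLinAlgEquiv' ((B - μ • (1 : Matrix (Fin d) (Fin d) ℂ)) ^ k)
            = (g - μ • 1) ^ k := by
          rw [map_pow, map_sub, _root_.map_smul, _root_.map_one, hg]
        calc ((B - μ • (1 : Matrix (Fin d) (Fin d) ℂ)) ^ k) *ᵥ v
            = Matrix.toLinAlgEquiv' ((B - μ • (1 : Matrix (Fin d) (Fin d) ℂ)) ^ k) v := by
              rw [Matrix.toLinAlgEquiv'_apply]
          _ = ((g - μ • 1) ^ k) v := by rw [h3]
          _ = 0 := hk
      -- conclude tendsto
      show Tendsto (fun t : ℝ => NormedSpace.exp (t • B) *ᵥ v) atTop (𝓝 0)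
      have heq : ∀ t : ℝ, NormedSpace.exp (t • B) *ᵥ v
          = ∑ j ∈ Finset.range k,
              (Complex.exp ((t:ℂ) * μ) * ((t:ℂ)^j * ((j.factorial : ℂ))⁻¹)) •
                (((B - μ • (1 : Matrix (Fin d) (Fin d) ℂ)) ^ j) *ᵥ v) :=
        exp_mulVec_eq B μ v k hNmv
      rw [show (0 : Fin d → ℂ) = ∑ j ∈ Finset.range k, (0 : Fin d → ℂ) by
        rw [Finset.sum_const_zero]]
      refine Tendsto.congr (fun t => (heq t).symm) (tendsto_finset_sum _ fun j hj => ?_)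
      simpa using (aux_scalar μ hμ j).smul_const
        (((B - μ • (1 : Matrix (Fin d) (Fin d) ℂ)) ^ j) *ᵥ v)
    exact hle hz
  -- transfer to the real trajectory
  set z₀ : Fin d → ℂ := fun i => (x₀ i : ℂ) with hz₀
  have hmap : ∀ t : ℝ, (NormedSpace.exp (t • A)).map (algebraMap ℝ ℂ)
      = NormedSpace.exp (t • B) := by
    intro t
    letI : SeminormedRing (Matrix (Fin d) (Fin d) ℝ) := Matrix.linftyOpSemiNormedRing
    letI : NormedRing (Matrix (Fin d) (Fin d) ℝ) := Matrix.linftyOpNormedRing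
    letI : NormedAlgebra ℝ (Matrix (Fin d) (Fin d) ℝ) := Matrix.linftyOpNormedAlgebra
    letI : SeminormedRing (Matrix (Fin d) (Fin d) ℂ) := Matrix.linftyOpSemiNormedRing
    letI : NormedRing (Matrix (Fin d) (Fin d) ℂ) := Matrix.linftyOpNormedRing
    letI : NormedAlgebra ℝ (Matrix (Fin d) (Fin d) ℂ) := Matrix.linftyOpNormedAlgebra
    have hcont : Continuous fun M : Matrix (Fin d) (Fin d) ℝ => M.map (algebraMap ℝ ℂ) :=
      Continuous.matrix_map continuous_id (continuous_algebraMap ℝ ℂ)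
    have hcont' : Continuous ((algebraMap ℝ ℂ).mapMatrix (m := Fin d)) := by
      exact hcont
    letI : NormedAlgebra ℚ (Matrix (Fin d) (Fin d) ℝ) := Matrix.linftyOpNormedAlgebra
    have h1 := NormedSpace.map_exp ((algebraMap ℝ ℂ).mapMatrix (m := Fin d)) hcont' (t • A)
    have h2 : (t • A).map (algebraMap ℝ ℂ) = t • B := by
      ext i j
      simp [hB, Matrix.map_apply, Matrix.smul_apply, smul_eq_mul, Complex.real_smul,
        Complex.ofReal_mul]
    have h3 : NormedSpace.exp (t • B) = NormedSpace.exp (t • B) :=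
      rfl
    calc (NormedSpace.exp (t • A)).map (algebraMap ℝ ℂ)
        = (algebraMap ℝ ℂ).mapMatrix (NormedSpace.exp (t • A)) := by
          rw [RingHom.mapMatrix_apply]
      _ = NormedSpace.exp ((algebraMap ℝ ℂ).mapMatrix (t • A)) := h1
      _ = NormedSpace.exp (t • B) := by rw [RingHom.mapMatrix_apply, h2]
      _ = NormedSpace.exp (t • B) := h3
  have hco : ∀ (t : ℝ) (i : Fin d),
      ((traj A x₀ t i : ℝ) : ℂ) = (NormedSpace.exp (t • B) *ᵥ z₀) i := by
    intro t i
    have h4 := RingHom.map_mulVec (algebraMap ℝ ℂ) (NormedSpace.exp (t • A)) x₀ i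
    rw [hmap t] at h4
    simpa [traj, hz₀, Function.comp_def] using h4
  rw [tendsto_pi_nhds]
  intro i
  have h1 : Tendsto (fun t : ℝ => (NormedSpace.exp (t • B) *ᵥ z₀) i) atTop (𝓝 0) := by
    have h5 := main z₀
    rw [tendsto_pi_nhds] at h5
    simpa using h5 i
  have h2 := (Complex.continuous_re.tendsto 0).comp h1
  simp only [Complex.zero_re] at h2
  rw [Pi.zero_apply]
  refine h2.congr fun t => ?_
  rw [Function.comp_apply, ← hco t i, Complex.ofReal_re]

lemma symm_convex_ball {E : Type*} [NormedAddCommGroup E] [NormedSpace ℝ E]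
    [FiniteDimensional ℝ E] {G : Set E} (hGconv : Convex ℝ G) (h0G : (0:E) ∈ G)
    (hsymm : -G = G) :
    ∃ ε > 0, ∀ y : E, y ∈ affineSpan ℝ G → ‖y‖ < ε → y ∈ intrinsicInterior ℝ G := by
  classical
  set V : Submodule ℝ E := Submodule.span ℝ G with hV
  have hGV : G ⊆ (V : Set E) := Submodule.subset_span
  have hspan : (affineSpan ℝ G : Set E) = (V : Set E) := by
    rw [← Set.insert_eq_self.mpr h0G]
    exact affineSpan_insert_zero _
  set s' : Set V := ((↑) : V → E) ⁻¹' G with hs'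
  have hconv' : Convex ℝ s' := hGconv.linear_preimage V.subtype
  have h0' : (0 : V) ∈ s' := by
    simp only [hs', Set.mem_preimage, Submodule.coe_zero]
    exact h0G
  -- the affine span of s' is everything
  have hspan' : affineSpan ℝ s' = ⊤ := by
    apply SetLike.coe_injective
    rw [AffineSubspace.top_coe, ← Set.insert_eq_self.mpr h0', affineSpan_insert_zero]
    have hmap : Submodule.map V.subtype (Submodule.span ℝ s') = Submodule.map V.subtype ⊤ := by
      rw [Submodule.map_span, Submodule.map_top, Submodule.range_subtype]
      have himg : (V.subtype '' s') = G := by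
        rw [hs']
        ext y
        simp only [Set.mem_image, Set.mem_preimage]
        constructor
        · rintro ⟨w, hw, rfl⟩; exact hw
        · intro hy; exact ⟨⟨y, hGV hy⟩, hy, rfl⟩
      rw [himg, hV]
    have := Submodule.map_injective_of_injective V.injective_subtype hmap
    rw [this, Submodule.top_coe]
  have hne : (interior s').Nonempty := by
    rw [Convex.interior_nonempty_iff_affineSpan_eq_top hconv']
    exact hspan'
  obtain ⟨y, hy⟩ := hne
  -- symmetry of s'
  have hpre : (Neg.neg ⁻¹' s' : Set V) = s' := by
    ext w
    simp only [Set.mem_preimage, hs', Submodule.coe_neg]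
    constructor
    · intro h
      rw [← hsymm]
      exact Set.mem_neg.mpr h
    · intro h
      rw [← hsymm, Set.mem_neg, neg_neg]
      exact h
  have hy' : -y ∈ interior s' := by
    have h6 := (Homeomorph.neg V).preimage_interior s'
    rw [Homeomorph.coe_neg, hpre] at h6
    rw [← h6]
    simp only [Set.mem_preimage, neg_neg]
    exact hy
  have h0int : (0 : V) ∈ interior s' := by
    have hconvInt : Convex ℝ (interior s') := hconv'.interior
    have hmem := hconvInt hy hy' (by norm_num : (0:ℝ) ≤ 1/2) (by norm_num : (0:ℝ) ≤ 1/2)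
      (by norm_num)
    rwa [smul_neg, add_neg_cancel] at hmem
  obtain ⟨ε, hε, hball⟩ := Metric.mem_nhds_iff.1 (mem_interior_iff_mem_nhds.1 h0int)
  refine ⟨ε, hε, fun z hzW hz => ?_⟩
  have hzV : z ∈ V := by
    have h7 : z ∈ (affineSpan ℝ G : Set E) := hzW
    rw [hspan] at h7
    exact h7
  -- now produce intrinsic interior membership
  rw [mem_intrinsicInterior]
  refine ⟨⟨z, hzW⟩, ?_, rfl⟩
  set U : Set (affineSpan ℝ G) := {w | ‖(w : E)‖ < ε} with hU
  have hUopen : IsOpen U := by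
    have : Continuous fun w : (affineSpan ℝ G) => ‖(w : E)‖ :=
      continuous_subtype_val.norm
    exact isOpen_Iio.preimage this
  have hUsub : U ⊆ ((↑) : affineSpan ℝ G → E) ⁻¹' G := by
    intro w hw
    have hwV : (w : E) ∈ V := by
      have h7 : (w : E) ∈ (affineSpan ℝ G : Set E) := w.2
      rw [hspan] at h7
      exact h7
    have : (⟨(w : E), hwV⟩ : V) ∈ Metric.ball (0 : V) ε := by
      rw [mem_ball_zero_iff]
      exact hw
    exact hball this
  exact interior_maximal hUsub hUopen (by exact hz : (⟨z, hzW⟩ : affineSpan ℝ G) ∈ U)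

/-- Every trajectory of a stable (Hurwitz) system possesses a cut tail point. -/
theorem exists_cutTailPoint {d : ℕ} (A : Matrix (Fin d) (Fin d) ℝ) (hA : IsHurwitz A)
    (x₀ : Fin d → ℝ) :
    ∃ T : ℝ, 0 < T ∧ ∀ t, T ≤ t → traj A x₀ t ∈ intrinsicInterior ℝ (trajHull A x₀) := by
  classical
  set X : Set (Fin d → ℝ) := traj A x₀ '' Ici (0:ℝ) with hX
  set G : Set (Fin d → ℝ) := trajHull A x₀ with hG
  have hGdef : G = convexHull ℝ (X ∪ (-X)) := rfl
  have hGconv : Convex ℝ G := by rw [hGdef]; exact convex_convexHull ℝ _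
  have htrajmem : ∀ t : ℝ, 0 ≤ t → traj A x₀ t ∈ G := by
    intro t ht
    rw [hGdef]
    exact subset_convexHull ℝ _ (Or.inl ⟨t, ht, rfl⟩)
  have hsymm : -G = G := by
    rw [hGdef, ← convexHull_neg]
    congr 1
    rw [Set.union_neg, neg_neg, Set.union_comm]
  have h0G : (0 : Fin d → ℝ) ∈ G := by
    have h1 : traj A x₀ 0 ∈ G := htrajmem 0 le_rfl
    have h2 : -traj A x₀ 0 ∈ G := by
      rw [← hsymm]
      exact Set.neg_mem_neg.mpr h1
    have hmem := hGconv h1 h2 (by norm_num : (0:ℝ) ≤ 1/2) (by norm_num : (0:ℝ) ≤ 1/2)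
      (by norm_num)
    rwa [smul_neg, add_neg_cancel] at hmem
  obtain ⟨ε, hε, hball⟩ := symm_convex_ball hGconv h0G hsymm
  have htend := tendsto_traj A hA x₀
  have hev : ∀ᶠ t in atTop, ‖traj A x₀ t‖ < ε := by
    have := htend.norm
    rw [norm_zero] at this
    exact this.eventually_lt_const hε |>.mono fun t ht => ht
  obtain ⟨T₀, hT₀⟩ := eventually_atTop.1 hev
  refine ⟨max T₀ 1, lt_of_lt_of_le one_pos (le_max_right _ _), fun t ht => ?_⟩
  have ht0 : (0:ℝ) ≤ t := le_trans (by positivity) (le_trans (le_max_right T₀ 1) ht)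
  have htG : traj A x₀ t ∈ G := htrajmem t ht0
  exact hball _ (subset_affineSpan ℝ G htG) (hT₀ t (le_trans (le_max_left _ _) ht))
end
end

section
/- Let A be a Hurwitz d×d real matrix, x₀ ∈ ℝ^d, x₀ ≠ 0, and T_cut = T_cut(x₀). Then every extreme point of G = co_s {e^{tA}x₀ : t ≥ 0} lies on the union of the two curves Γ(0,T_cut) and −Γ(0,T_cut), where Γ(0,T_cut) = {e^{tA}x₀ : t ∈ [0,T_cut]}. -/
open Matrix Set Filter Topology

noncomputable section

section DecayHelpers

variable {d : ℕ}

private lemma aux_exp_decay {c : ℝ} (hc : c < 0) (j : ℕ) :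
    Tendsto (fun t : ℝ => Real.exp (t * c) * t ^ j) atTop (𝓝 0) := by
  have hc0 : (0:ℝ) < -c := by linarith
  have h1 : Tendsto (fun t : ℝ => (-c) * t) atTop atTop :=
    Tendsto.const_mul_atTop hc0 tendsto_id
  have h2 := (Real.tendsto_pow_mul_exp_neg_atTop_nhds_zero j).comp h1
  have h3 := h2.const_mul ((-c)⁻¹ ^ j)
  rw [mul_zero] at h3
  refine h3.congr fun t => ?_
  simp only [Function.comp_apply]
  have harg : -(-c * t) = t * c := by ring
  rw [harg, mul_pow]
  have hne : (-c) ≠ 0 := ne_of_gt hc0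
  rw [← mul_assoc, ← mul_assoc, ← mul_pow, inv_mul_cancel₀ hne, one_pow, one_mul, mul_comm]

private lemma aux_cexp_decay {μ : ℂ} (hμ : μ.re < 0) (j : ℕ) :
    Tendsto (fun t : ℝ => Complex.exp (t * μ) * (t:ℂ) ^ j) atTop (𝓝 0) := by
  rw [tendsto_zero_iff_norm_tendsto_zero]
  refine (aux_exp_decay hμ j).congr' ?_
  filter_upwards [eventually_ge_atTop (0:ℝ)] with t ht
  rw [norm_mul, Complex.norm_exp, norm_pow, Complex.norm_real,
    Real.norm_eq_abs, abs_of_nonneg ht]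
  congr 2
  simp [Complex.re_ofReal_mul]

private lemma exp_mulVec_eq_sum {M : Matrix (Fin d) (Fin d) ℂ} {v : Fin d → ℂ} {k : ℕ}
    (h : ∀ j, k ≤ j → (M ^ j) *ᵥ v = 0) :
    NormedSpace.exp M *ᵥ v
      = ∑ j ∈ Finset.range k, ((j.factorial : ℂ))⁻¹ • ((M ^ j) *ᵥ v) := by
  letI : SeminormedRing (Matrix (Fin d) (Fin d) ℂ) := Matrix.linftyOpSemiNormedRing
  letI : NormedRing (Matrix (Fin d) (Fin d) ℂ) := Matrix.linftyOpNormedRing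
  letI : NormedAlgebra ℂ (Matrix (Fin d) (Fin d) ℂ) := Matrix.linftyOpNormedAlgebra
  have hs := NormedSpace.exp_series_hasSum_exp' (𝕂 := ℂ) M
  let L : Matrix (Fin d) (Fin d) ℂ →ₗ[ℂ] (Fin d → ℂ) :=
    { toFun := fun P => P *ᵥ v
      map_add' := fun P Q => add_mulVec P Q v
      map_smul' := fun c P => smul_mulVec c P v }
  have hL : Continuous L := LinearMap.continuous_of_finiteDimensional L
  have hs2 := hs.map L.toAddMonoidHom hL
  have hs2' : HasSum (fun n => ((n.factorial : ℂ))⁻¹ • ((M ^ n) *ᵥ v))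
      (NormedSpace.exp M *ᵥ v) := by
    refine hs2.congr_fun fun n => ?_
    simp only [Function.comp_apply, LinearMap.toAddMonoidHom_coe, L.map_smul]; rfl
  refine hs2'.unique (hasSum_sum_of_ne_finset_zero ?_)
  intro j hj
  rw [h j (by simpa using hj), smul_zero]

private lemma isRoot_charpoly_of_eigen {A' : Matrix (Fin d) (Fin d) ℂ} {μ : ℂ}
    {w : Fin d → ℂ} (hw : w ≠ 0) (hMw : (A' - μ • 1) *ᵥ w = 0) :
    A'.charpoly.IsRoot μ := by
  have hdet : (A' - μ • (1 : Matrix (Fin d) (Fin d) ℂ)).det = 0 :=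
    Matrix.exists_mulVec_eq_zero_iff.mp ⟨w, hw, hMw⟩
  have hscalar : Matrix.scalar (Fin d) μ - A' = -(A' - μ • 1) := by
    rw [neg_sub, Matrix.scalar_apply]
    congr 1
    ext i j
    by_cases hij : i = j <;> simp [Matrix.diagonal_apply, Matrix.one_apply, hij]
  show A'.charpoly.eval μ = 0
  rw [Matrix.charpoly, eval_det, Matrix.matPolyEquiv_charmatrix,
    Polynomial.eval_sub, Polynomial.eval_X, Polynomial.eval_C, hscalar, Matrix.det_neg,
    hdet, mul_zero]

private lemma complex_decay {A : Matrix (Fin d) (Fin d) ℝ} (hA : IsHurwitz A)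
    (v : Fin d → ℂ) :
    Tendsto (fun t : ℝ => NormedSpace.exp (t • (A.map (algebraMap ℝ ℂ))) *ᵥ v)
      atTop (𝓝 0) := by
  set A' := A.map (algebraMap ℝ ℂ) with hA'def
  set f : Module.End ℂ (Fin d → ℂ) := Matrix.toLinAlgEquiv' A' with hfdef
  have hv : v ∈ ⨆ μ : ℂ, f.maxGenEigenspace μ := by
    rw [Module.End.iSup_maxGenEigenspace_eq_top]; trivial
  refine Submodule.iSup_induction (motive := fun w =>
    Tendsto (fun t : ℝ => NormedSpace.exp (t • A') *ᵥ w) atTop (𝓝 0)) _ hv ?_ ?_ ?_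
  · -- main case
    intro μ w hw
    rcases eq_or_ne w 0 with rfl | hw0
    · simpa [Matrix.mulVec_zero] using (tendsto_const_nhds :
        Tendsto (fun _ : ℝ => (0 : Fin d → ℂ)) atTop (𝓝 0))
    obtain ⟨k, hk⟩ := (Module.End.mem_maxGenEigenspace f μ w).mp hw
    set N := A' - μ • (1 : Matrix (Fin d) (Fin d) ℂ) with hNdef
    have hfN : Matrix.toLinAlgEquiv' N = f - μ • 1 := by
      rw [hNdef, map_sub, _root_.map_smul, _root_.map_one]
    have hNk : (N ^ k) *ᵥ w = 0 := by
      have h1 : (Matrix.toLinAlgEquiv' (N ^ k)) w = 0 := by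
        rw [map_pow, hfN]; exact hk
      rwa [Matrix.toLinAlgEquiv'_apply] at h1
    have hNj : ∀ j, k ≤ j → (N ^ j) *ᵥ w = 0 := by
      intro j hj
      have : N ^ j = N ^ (j - k) * N ^ k := by rw [← pow_add]; congr 1; omega
      rw [this, ← mulVec_mulVec, hNk, mulVec_zero]
    -- μ has negative real part
    have hμre : μ.re < 0 := by
      have hex : ∃ j, (N ^ j) *ᵥ w = 0 := ⟨k, hNk⟩
      have hjne : Nat.find hex ≠ 0 := by
        intro h0
        have := Nat.find_spec hex
        rw [h0, pow_zero, one_mulVec] at this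
        exact hw0 this
      obtain ⟨m, hm⟩ := Nat.exists_eq_succ_of_ne_zero hjne
      have hwm : (N ^ m) *ᵥ w ≠ 0 := Nat.find_min hex (by omega)
      have hNwm : N *ᵥ ((N ^ m) *ᵥ w) = 0 := by
        rw [mulVec_mulVec, ← pow_succ', show m + 1 = Nat.find hex by omega]
        exact Nat.find_spec hex
      exact hA μ (isRoot_charpoly_of_eigen hwm hNwm)
    -- key formula
    have hkey : ∀ t : ℝ, NormedSpace.exp (t • A') *ᵥ w =
        Complex.exp (t * μ) •
          ∑ j ∈ Finset.range k, ((j.factorial : ℂ))⁻¹ • (t ^ j • ((N ^ j) *ᵥ w)) := by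
      intro t
      have hdiag : Matrix.diagonal (fun _ : Fin d => (t:ℂ) * μ)
          = t • (μ • (1 : Matrix (Fin d) (Fin d) ℂ)) := by
        ext i j
        by_cases hij : i = j <;>
          simp [Matrix.diagonal_apply, Matrix.one_apply, hij, Complex.real_smul]
      have hsplit : t • A' = Matrix.diagonal (fun _ : Fin d => (t:ℂ) * μ) + t • N := by
        rw [hdiag, ← smul_add, hNdef, add_sub_cancel]
      have hcomm : Commute (Matrix.diagonal fun _ : Fin d => (t:ℂ) * μ) (t • N) := by
        rw [hdiag]
        exact ((Commute.one_left (t • N)).smul_left μ).smul_left t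
      have hexp1 : NormedSpace.exp (t • A')
          = Matrix.diagonal (fun _ : Fin d => Complex.exp (t * μ)) * NormedSpace.exp (t • N) := by
        rw [hsplit, Matrix.exp_add_of_commute _ _ hcomm, Matrix.exp_diagonal]
        have hPiexp : (NormedSpace.exp fun _ : Fin d => (t:ℂ) * μ)
            = fun _ : Fin d => Complex.exp ((t:ℂ) * μ) := by
          funext i
          rw [Pi.coe_exp, Complex.exp_eq_exp_ℂ]
        rw [hPiexp]
      have hexpN : NormedSpace.exp (t • N) *ᵥ w
          = ∑ j ∈ Finset.range k, ((j.factorial : ℂ))⁻¹ • (t ^ j • ((N ^ j) *ᵥ w)) := by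
        rw [exp_mulVec_eq_sum (k := k) ?_]
        · refine Finset.sum_congr rfl fun j _ => ?_
          rw [smul_pow, smul_mulVec]
        · intro j hj
          rw [smul_pow, smul_mulVec, hNj j hj, smul_zero]
      rw [hexp1, ← mulVec_mulVec, hexpN]
      funext i
      rw [mulVec_diagonal]
      simp [Pi.smul_apply, smul_eq_mul]
    -- limit
    rw [tendsto_pi_nhds]
    intro i
    have hterm : ∀ j : ℕ, Tendsto (fun t : ℝ =>
        Complex.exp (t * μ) * (t:ℂ) ^ j *
          (((j.factorial : ℂ))⁻¹ * ((N ^ j) *ᵥ w) i)) atTop (𝓝 0) := by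
      intro j
      simpa using (aux_cexp_decay hμre j).mul_const (((j.factorial : ℂ))⁻¹ * ((N ^ j) *ᵥ w) i)
    have hsum := tendsto_finset_sum (Finset.range k) (fun j _ => hterm j)
    rw [Finset.sum_const_zero] at hsum
    refine hsum.congr fun t => ?_
    rw [hkey t]
    rw [Pi.smul_apply, Finset.sum_apply]
    rw [Finset.smul_sum]
    refine Finset.sum_congr rfl fun j _ => ?_
    simp only [Pi.smul_apply, smul_eq_mul, Complex.real_smul, Complex.ofReal_pow]
    ring
  · simpa [Matrix.mulVec_zero] using (tendsto_const_nhds :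
      Tendsto (fun _ : ℝ => (0 : Fin d → ℂ)) atTop (𝓝 0))
  · intro w₁ w₂ h1 h2
    have := h1.add h2
    rw [add_zero] at this
    refine this.congr fun t => ?_
    rw [mulVec_add]

lemma traj_tendsto_zero {A : Matrix (Fin d) (Fin d) ℝ} (hA : IsHurwitz A)
    (x₀ : Fin d → ℝ) : Tendsto (traj A x₀) atTop (𝓝 0) := by
  have hC := complex_decay hA (fun i => (x₀ i : ℂ))
  rw [tendsto_pi_nhds] at hC ⊢
  intro i
  have hre := (Complex.continuous_re.tendsto 0).comp (hC i)
  rw [Complex.zero_re] at hre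
  refine hre.congr fun t => ?_
  simp only [Function.comp_apply]
  letI : SeminormedRing (Matrix (Fin d) (Fin d) ℝ) := Matrix.linftyOpSemiNormedRing
  letI : NormedRing (Matrix (Fin d) (Fin d) ℝ) := Matrix.linftyOpNormedRing
  letI : NormedAlgebra ℝ (Matrix (Fin d) (Fin d) ℝ) := Matrix.linftyOpNormedAlgebra
  letI : SeminormedRing (Matrix (Fin d) (Fin d) ℂ) := Matrix.linftyOpSemiNormedRing
  letI : NormedRing (Matrix (Fin d) (Fin d) ℂ) := Matrix.linftyOpNormedRing
  letI : NormedAlgebra ℝ (Matrix (Fin d) (Fin d) ℂ) := Matrix.linftyOpNormedAlgebra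
  letI : NormedAlgebra ℚ (Matrix (Fin d) (Fin d) ℝ) := Matrix.linftyOpNormedAlgebra
  have hmapsmul : t • (A.map (algebraMap ℝ ℂ)) = (t • A).map (algebraMap ℝ ℂ) := by
    ext i' j'
    simp [Matrix.map_apply, Matrix.smul_apply, smul_eq_mul, Complex.real_smul]
  have hcont : Continuous ((algebraMap ℝ ℂ).mapMatrix :
      Matrix (Fin d) (Fin d) ℝ →+* Matrix (Fin d) (Fin d) ℂ) := by
    show Continuous fun M : Matrix (Fin d) (Fin d) ℝ => M.map (algebraMap ℝ ℂ)
    exact continuous_id.matrix_map (continuous_algebraMap ℝ ℂ)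
  have hmap := NormedSpace.map_exp ((algebraMap ℝ ℂ).mapMatrix :
      Matrix (Fin d) (Fin d) ℝ →+* Matrix (Fin d) (Fin d) ℂ) hcont (t • A)
  simp only [RingHom.mapMatrix_apply] at hmap
  have hvec : (fun i => ((x₀ i : ℂ))) = ⇑(algebraMap ℝ ℂ) ∘ x₀ := by
    funext i'; simp
  rw [hmapsmul]; erw [← hmap]; rw [hvec]
  have := RingHom.map_mulVec (algebraMap ℝ ℂ) (NormedSpace.exp (t • A)) x₀ i
  erw [← this]
  simp [traj]

end DecayHelpers


section GeomHelpers

variable {d : ℕ} {A : Matrix (Fin d) (Fin d) ℝ} {x₀ : Fin d → ℝ}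

lemma traj_zero (A : Matrix (Fin d) (Fin d) ℝ) (x₀ : Fin d → ℝ) : traj A x₀ 0 = x₀ := by
  rw [traj, zero_smul, NormedSpace.exp_zero, one_mulVec]

lemma traj_mem_trajHull {t : ℝ} (ht : 0 ≤ t) : traj A x₀ t ∈ trajHull A x₀ :=
  subset_convexHull ℝ _ (Or.inl ⟨t, ht, rfl⟩)

lemma x0_mem_trajHull : x₀ ∈ trajHull A x₀ := by
  have h := traj_mem_trajHull (A := A) (x₀ := x₀) (t := 0) le_rfl
  rwa [traj_zero] at h

lemma neg_trajHull (A : Matrix (Fin d) (Fin d) ℝ) (x₀ : Fin d → ℝ) :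
    -(trajHull A x₀) = trajHull A x₀ := by
  unfold trajHull symCo
  rw [← convexHull_neg]
  congr 1
  ext z
  simp only [Set.mem_neg, Set.mem_union]
  constructor
  · rintro (h | h)
    · exact Or.inr (by simpa [Set.mem_neg] using h)
    · exact Or.inl (by simpa [Set.mem_neg] using h)
  · rintro (h | h)
    · exact Or.inr (by simpa [Set.mem_neg] using h)
    · exact Or.inl (by simpa [Set.mem_neg] using h)

lemma neg_x0_mem_trajHull : -x₀ ∈ trajHull A x₀ := by
  rw [← neg_trajHull A x₀]
  exact Set.neg_mem_neg.mpr x0_mem_trajHull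

lemma convex_trajHull : Convex ℝ (trajHull A x₀) := convex_convexHull ℝ _

lemma zero_mem_trajHull : (0 : Fin d → ℝ) ∈ trajHull A x₀ := by
  have h := convex_trajHull (x₀ := x₀) (A := A) x0_mem_trajHull neg_x0_mem_trajHull
    (by norm_num : (0:ℝ) ≤ 1/2) (by norm_num : (0:ℝ) ≤ 1/2) (by norm_num)
  simpa using h

/-- Elementary metric description of the intrinsic interior. -/
lemma mem_intrinsicInterior_iff' {s : Set (Fin d → ℝ)} {x : Fin d → ℝ} :
    x ∈ intrinsicInterior ℝ s ↔
      x ∈ affineSpan ℝ s ∧ ∃ ε > 0, ∀ z ∈ (affineSpan ℝ s : Set (Fin d → ℝ)),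
        dist z x < ε → z ∈ s := by
  constructor
  · intro h
    obtain ⟨y, hy, rfl⟩ := mem_intrinsicInterior.mp h
    refine ⟨y.2, ?_⟩
    obtain ⟨V, hVs, hVo, hyV⟩ := mem_interior.mp hy
    obtain ⟨U, hUo, hUV⟩ := isOpen_induced_iff.mp hVo
    obtain ⟨ε, hε, hball⟩ := Metric.isOpen_iff.mp hUo y (by
      have : (y : Fin d → ℝ) ∈ Subtype.val '' V := ⟨y, hyV, rfl⟩
      rw [← hUV] at hyV
      exact hyV)
    refine ⟨ε, hε, fun z hz hd => ?_⟩
    have : (⟨z, hz⟩ : affineSpan ℝ s) ∈ V := by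
      rw [← hUV]
      exact hball (by simpa [Metric.mem_ball] using hd)
    exact hVs this
  · rintro ⟨hx, ε, hε, hb⟩
    rw [mem_intrinsicInterior]
    refine ⟨⟨x, hx⟩, ?_, rfl⟩
    rw [mem_interior]
    refine ⟨Subtype.val ⁻¹' Metric.ball x ε, ?_, ?_, ?_⟩
    · intro z hz
      exact hb z z.2 (by simpa [Metric.mem_ball] using hz)
    · exact (Metric.isOpen_ball).preimage continuous_subtype_val
    · simpa [Metric.mem_ball] using hε

lemma zero_mem_intrinsicInterior :
    (0 : Fin d → ℝ) ∈ intrinsicInterior ℝ (trajHull A x₀) := by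
  obtain ⟨y, hy⟩ := Set.Nonempty.intrinsicInterior convex_trajHull ⟨x₀, x0_mem_trajHull⟩
  have hyG : y ∈ trajHull A x₀ := intrinsicInterior_subset hy
  obtain ⟨hys, ε, hε, hb⟩ := mem_intrinsicInterior_iff'.mp hy
  rw [mem_intrinsicInterior_iff']
  refine ⟨subset_affineSpan ℝ _ zero_mem_trajHull, ε/2, by positivity, fun z hz hd => ?_⟩
  have hzspan : (2:ℝ) • z + y ∈ (affineSpan ℝ (trajHull A x₀) : Set (Fin d → ℝ)) := by
    have := AffineSubspace.smul_vsub_vadd_mem (affineSpan ℝ (trajHull A x₀)) (2:ℝ)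
      hz (subset_affineSpan ℝ _ zero_mem_trajHull) hys
    simpa [vsub_eq_sub, vadd_eq_add] using this
  have hzG : (2:ℝ) • z + y ∈ trajHull A x₀ := by
    refine hb _ hzspan ?_
    rw [dist_eq_norm, add_sub_cancel_right, norm_smul]
    rw [dist_zero_right] at hd
    simp only [Real.norm_ofNat]
    linarith
  have hnegyG : -y ∈ trajHull A x₀ := by
    rw [← neg_trajHull A x₀]; exact Set.neg_mem_neg.mpr hyG
  have h := convex_trajHull (x₀ := x₀) (A := A) hzG hnegyG
    (by norm_num : (0:ℝ) ≤ 1/2) (by norm_num : (0:ℝ) ≤ 1/2) (by norm_num)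
  have heq : (1/2:ℝ) • ((2:ℝ) • z + y) + (1/2:ℝ) • (-y) = z := by module
  rwa [heq] at h

lemma not_extremePoint_of_mem_intrinsicInterior (hx₀ : x₀ ≠ 0) {x : Fin d → ℝ}
    (hi : x ∈ intrinsicInterior ℝ (trajHull A x₀)) :
    x ∉ Set.extremePoints ℝ (trajHull A x₀) := by
  intro hex
  obtain ⟨hxs, ε, hε, hb⟩ := mem_intrinsicInterior_iff'.mp hi
  have hnx : (0:ℝ) < ‖x₀‖ := norm_pos_iff.mpr hx₀
  set δ := ε / (2 * ‖x₀‖) with hδdef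
  have hδpos : 0 < δ := by positivity
  have hsp : ∀ c : ℝ, x + c • x₀ ∈ (affineSpan ℝ (trajHull A x₀) : Set (Fin d → ℝ)) := by
    intro c
    have h2 := AffineSubspace.smul_vsub_vadd_mem (affineSpan ℝ (trajHull A x₀)) (c/2)
      (subset_affineSpan ℝ _ (x0_mem_trajHull (A := A)))
      (subset_affineSpan ℝ _ (neg_x0_mem_trajHull (A := A))) hxs
    have heq : (c/2) • (x₀ -ᵥ (-x₀)) +ᵥ x = x + c • x₀ := by
      simp only [vsub_eq_sub, vadd_eq_add]
      module
    rwa [heq] at h2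
  have hmem : ∀ c : ℝ, |c| * ‖x₀‖ < ε → x + c • x₀ ∈ trajHull A x₀ := by
    intro c hc
    refine hb _ (hsp c) ?_
    rw [dist_eq_norm, add_sub_cancel_left, norm_smul, Real.norm_eq_abs]
    exact hc
  have habs : |δ| * ‖x₀‖ < ε := by
    have hδval : δ * ‖x₀‖ = ε / 2 := by
      rw [hδdef]; field_simp
    rw [abs_of_pos hδpos, hδval]
    linarith
  have h1 := hmem δ habs
  have h2 := hmem (-δ) (by rwa [abs_neg])
  have hseg : x ∈ openSegment ℝ (x + δ • x₀) (x + (-δ) • x₀) :=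
    ⟨1/2, 1/2, by norm_num, by norm_num, by norm_num, by module⟩
  have heq1 := hex.2 h1 h2 hseg
  have : δ • x₀ = 0 := by
    have := congrArg (fun z => z - x) heq1
    simpa [add_sub_cancel_left] using this
  rcases smul_eq_zero.mp this with h | h
  · exact hδpos.ne' h
  · exact hx₀ h

lemma neg_mem_extremePoints {x : Fin d → ℝ}
    (hx : x ∈ Set.extremePoints ℝ (trajHull A x₀)) :
    -x ∈ Set.extremePoints ℝ (trajHull A x₀) := by
  obtain ⟨hxG, hext⟩ := hx
  refine ⟨by rw [← neg_trajHull A x₀]; exact Set.neg_mem_neg.mpr hxG, ?_⟩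
  rintro y hy z hz ⟨a, b, ha, hb, hab, habz⟩
  have hy' : -y ∈ trajHull A x₀ := by
    rw [← neg_trajHull A x₀]; exact Set.neg_mem_neg.mpr hy
  have hz' : -z ∈ trajHull A x₀ := by
    rw [← neg_trajHull A x₀]; exact Set.neg_mem_neg.mpr hz
  have hseg : x ∈ openSegment ℝ (-y) (-z) := by
    refine ⟨a, b, ha, hb, hab, ?_⟩
    rw [smul_neg, smul_neg, ← neg_add, habz, neg_neg]
  have h1 := hext hy' hz' hseg
  rw [← h1, neg_neg]

end GeomHelpers


/-- All extreme points of `G` are located on the curves `± Γ(0, T_cut)`. -/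
theorem extremePoints_subset_arcs {d : ℕ} (A : Matrix (Fin d) (Fin d) ℝ) (hA : IsHurwitz A)
    (x₀ : Fin d → ℝ) (hx₀ : x₀ ≠ 0) :
    Set.extremePoints ℝ (trajHull A x₀) ⊆
      (traj A x₀ '' Icc (0:ℝ) (Tcut A x₀)) ∪ (-(traj A x₀ '' Icc (0:ℝ) (Tcut A x₀))) := by
  classical
  intro x hx
  -- existence of a cut tail point
  have hcutne : ∃ T, IsCutTailPoint A x₀ T := by
    obtain ⟨hsp0, ε, hε, hb⟩ := mem_intrinsicInterior_iff'.mp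
      (zero_mem_intrinsicInterior (A := A) (x₀ := x₀))
    have hdecay := traj_tendsto_zero hA x₀
    have hev : ∀ᶠ t in atTop, dist (traj A x₀ t) 0 < ε/2 :=
      (Metric.tendsto_nhds.mp hdecay) (ε/2) (by positivity)
    rw [eventually_atTop] at hev
    obtain ⟨T₀, hT₀⟩ := hev
    refine ⟨max T₀ 1, lt_of_lt_of_le one_pos (le_max_right _ _), fun t ht => ?_⟩
    have ht0 : (0:ℝ) ≤ t := le_trans (le_trans one_pos.le (le_max_right T₀ 1)) ht
    rw [mem_intrinsicInterior_iff']
    refine ⟨subset_affineSpan ℝ _ (traj_mem_trajHull ht0), ε/2, by positivity,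
      fun z hz hd => ?_⟩
    refine hb z hz ?_
    have h1 := hT₀ t (le_trans (le_max_left T₀ 1) ht)
    calc dist z 0 ≤ dist z (traj A x₀ t) + dist (traj A x₀ t) 0 := dist_triangle _ _ _
      _ < ε/2 + ε/2 := by exact add_lt_add hd h1
      _ = ε := by ring
  have hkey : ∀ t : ℝ, 0 ≤ t → ¬ t ≤ Tcut A x₀ →
      traj A x₀ t ∈ intrinsicInterior ℝ (trajHull A x₀) := by
    intro t ht0 hgt
    obtain ⟨T, hT, hTt⟩ := exists_lt_of_csInf_lt hcutne (lt_of_not_ge hgt)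
    exact hT.2 t hTt.le
  have hx' : x ∈ (traj A x₀ '' Ici (0:ℝ)) ∪ (-(traj A x₀ '' Ici (0:ℝ))) :=
    extremePoints_convexHull_subset hx
  rcases hx' with ⟨t, ht, rfl⟩ | hneg
  · by_cases hle : t ≤ Tcut A x₀
    · exact Or.inl ⟨t, ⟨ht, hle⟩, rfl⟩
    · exact absurd hx
        (not_extremePoint_of_mem_intrinsicInterior hx₀ (hkey t ht hle))
  · rw [Set.mem_neg] at hneg
    obtain ⟨t, ht, hteq⟩ := hneg
    by_cases hle : t ≤ Tcut A x₀
    · exact Or.inr (Set.mem_neg.mpr ⟨t, ⟨ht, hle⟩, hteq⟩)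
    · have hii := hkey t ht hle
      rw [hteq] at hii
      exact absurd (neg_mem_extremePoints hx)
        (not_extremePoint_of_mem_intrinsicInterior hx₀ hii)
end
end
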